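/- arXiv:math/0305226 — 2 statements merged into one kernel-verified Lean document; each statement's English description precedes it below -/
import Mathlib

section
/- Let K ⊆ F be a field extension, let L/K be a (possibly infinite) Galois extension inside a fixed separable closure, and suppose F is linearly disjoint from L over K in the sense that the restriction map Gal(FL/F) → Gal(L/K) is an isomorphism. If moreover F·K^sep = F^sep and F/K is regular (K separably algebraically closed in F), then res : G_F → G_K is an isomorphism of profinite groups. -/
set_option maxHeartbeats 1000000
set_option synthInstance.maxHeartbeats 400000
open Polynomial IntermediateField
open scoped TensorProduct


lemma coeff_mem_of_roots_mem {K Ω : Type*} [Field K] [Field Ω] [Algebra K Ω]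
    (S : IntermediateField K Ω) (d : Polynomial Ω) (hd : d.Monic)
    (hsplit : d.Splits)
    (hroots : ∀ r ∈ d.roots, r ∈ S) (n : ℕ) : d.coeff n ∈ S := by
  have hprod := hsplit.eq_prod_roots_of_monic hd
  have hmem : d ∈ Polynomial.lifts (algebraMap S Ω) := by
    rw [hprod]
    refine Subsemiring.multiset_prod_mem _ _ fun q hq => ?_
    simp only [Multiset.mem_map] at hq
    obtain ⟨r, hr, rfl⟩ := hq
    have hxc : X - C r = X + C (-r) := by rw [map_neg]; ring
    rw [hxc]
    exact add_mem (Polynomial.X_mem_lifts _)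
      (Polynomial.C_mem_lifts (algebraMap S Ω) ⟨-r, neg_mem (hroots r hr)⟩)
  obtain ⟨c, hc⟩ := (Polynomial.lifts_iff_coeff_lifts d).1 hmem n
  exact hc ▸ c.2

lemma key_minpoly {K F Ω : Type*} [Field K] [Field F] [Field Ω] [Algebra K F] [Algebra F Ω]
    [Algebra K Ω] [IsScalarTower K F Ω] [IsAlgClosed Ω]
    (hreg : ∀ x : F, IsSeparable K x → x ∈ (algebraMap K F).range)
    (α : Ω) (hα : α ∈ separableClosure K Ω) :
    (minpoly F α).natDegree = (minpoly K α).natDegree := by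
  have hsep : IsSeparable K α := (mem_separableClosure_iff).1 hα
  have hint : IsIntegral K α := hsep.isIntegral
  have hintF : IsIntegral F α := hint.tower_top
  set p := minpoly K α with hp
  set q := minpoly F α with hq
  have hq_dvd : q ∣ p.map (algebraMap K F) := minpoly.dvd_map_of_isScalarTower K F α
  have hpΩ : p.map (algebraMap K Ω) ≠ 0 :=
    (Polynomial.map_ne_zero_iff (algebraMap K Ω).injective).2 (minpoly.ne_zero hint)
  have hdvd : q.map (algebraMap F Ω) ∣ p.map (algebraMap K Ω) := by
    rw [IsScalarTower.algebraMap_eq K F Ω, ← Polynomial.map_map]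
    exact Polynomial.map_dvd _ hq_dvd
  -- coefficients of q lie in the image of K
  have hcoeff : ∀ n, q.coeff n ∈ (algebraMap K F).range := by
    intro n
    refine hreg _ ?_
    have hmem : (algebraMap F Ω) (q.coeff n) ∈ separableClosure K Ω := by
      have := coeff_mem_of_roots_mem (separableClosure K Ω) (q.map (algebraMap F Ω))
        ((minpoly.monic hintF).map _) (IsAlgClosed.splits _) ?_ n
      · simpa using this
      · intro r hr
        have hr' : r ∈ (p.map (algebraMap K Ω)).roots :=
          Multiset.mem_of_le (Polynomial.roots.le_of_dvd hpΩ hdvd) hr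
        rw [Polynomial.mem_roots hpΩ, Polynomial.IsRoot, Polynomial.eval_map,
          ← Polynomial.aeval_def] at hr'
        have : minpoly K r ∣ p := minpoly.dvd K r hr'
        exact mem_separableClosure_iff.2 (hsep.of_dvd this)
    rw [IsSeparable, ← minpoly.algebraMap_eq (algebraMap F Ω).injective]
    exact (mem_separableClosure_iff).1 hmem
  -- lift q to K
  have hqlifts : q ∈ Polynomial.lifts (algebraMap K F) :=
    (Polynomial.lifts_iff_coeff_lifts q).2 fun n => hcoeff n
  obtain ⟨q₀, hq₀map, hq₀deg, hq₀monic⟩ :=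
    Polynomial.lifts_and_degree_eq_and_monic hqlifts (minpoly.monic hintF)
  have hq₀root : Polynomial.aeval α q₀ = 0 := by
    rw [Polynomial.aeval_def, IsScalarTower.algebraMap_eq K F Ω, ← Polynomial.eval₂_map,
      hq₀map, ← Polynomial.aeval_def]
    exact minpoly.aeval F α
  have h1 : p.natDegree ≤ q₀.natDegree :=
    Polynomial.natDegree_le_natDegree (minpoly.min K α hq₀monic hq₀root)
  have h2 : q₀.natDegree = q.natDegree := by
    have := hq₀deg
    exact Polynomial.natDegree_eq_of_degree_eq this
  have h3 : q.natDegree ≤ p.natDegree := by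
    have := Polynomial.natDegree_le_natDegree (Polynomial.degree_le_of_dvd hdvd hpΩ)
    simpa using this
  omega

lemma key_LD {K F Ω : Type*} [Field K] [Field F] [Field Ω] [Algebra K F] [Algebra F Ω]
    [Algebra K Ω] [IsScalarTower K F Ω] [IsAlgClosed Ω]
    (hreg : ∀ x : F, IsSeparable K x → x ∈ (algebraMap K F).range) :
    (separableClosure K Ω).LinearDisjoint F := by
  rw [IntermediateField.linearDisjoint_iff]
  set A := (separableClosure K Ω).toSubalgebra with hA
  set B := (IsScalarTower.toAlgHom K F Ω).range with hB
  haveI : Algebra.IsIntegral K A := by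
    constructor
    intro x
    rw [← isIntegral_algHom_iff A.val Subtype.val_injective]
    exact ((mem_separableClosure_iff).1 x.2).isIntegral
  refine Subalgebra.LinearDisjoint.of_linearDisjoint_finite_left A B fun A' hA' hfin => ?_
  obtain ⟨s, hs⟩ := Module.finite_def.mp hfin
  set t : Set Ω := Subtype.val '' (s : Set A') with ht
  haveI : Finite t := (s.finite_toSet.image _).to_subtype
  have htsep : ∀ x ∈ t, x ∈ separableClosure K Ω := by
    rintro x ⟨y, -, rfl⟩
    exact hA' y.2
  set E := IntermediateField.adjoin K t with hE
  have hEsep : E ≤ separableClosure K Ω := IntermediateField.adjoin_le_iff.2 htsep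
  haveI : FiniteDimensional K E :=
    IntermediateField.finiteDimensional_adjoin fun x hx =>
      ((mem_separableClosure_iff).1 (htsep x hx)).isIntegral
  haveI : Algebra.IsSeparable K E := by
    constructor
    intro x
    have h0 : minpoly K ((algebraMap E Ω) x) = minpoly K x :=
      minpoly.algebraMap_eq (algebraMap E Ω).injective x
    have hxsep : IsSeparable K ((algebraMap E Ω) x) :=
      (mem_separableClosure_iff).1 (hEsep x.2)
    rwa [IsSeparable, h0] at hxsep
  obtain ⟨a, ha⟩ := Field.exists_primitive_element K E
  set α : Ω := (a : Ω) with hα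
  have hαsep : α ∈ separableClosure K Ω := hEsep a.2
  have hαint : IsIntegral K α := ((mem_separableClosure_iff).1 hαsep).isIntegral
  have hαintF : IsIntegral F α := hαint.tower_top
  have hEα : E = K⟮α⟯ := by
    have h1 : IntermediateField.lift (K⟮a⟯) = IntermediateField.lift (⊤ : IntermediateField K E) := by
      rw [ha]
    rw [IntermediateField.lift_adjoin_simple, IntermediateField.lift_top] at h1
    exact h1.symm
  have hA'α : A' ≤ K⟮α⟯.toSubalgebra := by
    intro x hx
    rw [← hEα]
    have hxsp : (⟨x, hx⟩ : A') ∈ Submodule.span K (s : Set A') := by rw [hs]; trivial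
    have main : ∀ (y : A'), y ∈ Submodule.span K (s : Set A') → ((y : Ω) ∈ E) := by
      intro y hy
      refine Submodule.span_induction (M := A') (p := fun z _ => ((z : Ω) ∈ E)) ?_ ?_ ?_ ?_ hy
      · intro z hz
        exact IntermediateField.subset_adjoin _ _ (Set.mem_image_of_mem _ hz)
      · exact zero_mem E
      · intro y z _ _ hy hz; exact add_mem hy hz
      · intro k y _ hy
        show (k • (y : Ω)) ∈ E
        exact E.toSubalgebra.smul_mem hy k
    exact main ⟨x, hx⟩ hxsp
  refine Subalgebra.LinearDisjoint.of_le_left_of_flat ?_ hA'α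
  have key := key_minpoly hreg α hαsep
  refine IntermediateField.LinearDisjoint.of_basis_left
    (IntermediateField.adjoin.powerBasis hαint).basis ?_
  have hind : LinearIndependent F
      (fun i : Fin (minpoly F α).natDegree => α ^ (i : ℕ)) := by
    have h1 := (IntermediateField.adjoin.powerBasis hαintF).basis.linearIndependent
    have h2 := h1.map' (F⟮α⟯.val.toLinearMap)
      (LinearMap.ker_eq_bot.2 (F⟮α⟯.val.toRingHom.injective))
    convert h2 using 1
    · rfl
    apply heq_of_eq
    funext i
    show α ^ (i : ℕ) = F⟮α⟯.val ((IntermediateField.adjoin.powerBasis hαintF).basis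
      (Fin.cast (m := (IntermediateField.adjoin.powerBasis hαintF).dim) rfl i))
    simp only [Function.comp_apply, AlgHom.toLinearMap_apply, IntermediateField.coe_val]
    rw [PowerBasis.basis_eq_pow, IntermediateField.adjoin.powerBasis_gen]
    push_cast
    rw [IntermediateField.AdjoinSimple.coe_gen]
    all_goals rfl
  have hind2 : LinearIndependent F
      (fun i : Fin (minpoly K α).natDegree => α ^ (i : ℕ)) := by
    rw [← key]; exact hind
  convert hind2 using 1
  · rfl
  apply heq_of_eq
  funext i
  simp only [Function.comp_apply, IntermediateField.coe_val]
  rw [PowerBasis.basis_eq_pow, IntermediateField.adjoin.powerBasis_gen]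
  push_cast
  rw [IntermediateField.AdjoinSimple.coe_gen]

/-- A copy of a type, used to carry a second algebra structure. -/
def OmegaCopy (Ω : Type*) : Type _ := Ω

instance {Ω : Type*} [Field Ω] : Field (OmegaCopy Ω) := ‹Field Ω›
instance {Ω : Type*} [Field Ω] [IsAlgClosed Ω] : IsAlgClosed (OmegaCopy Ω) := ‹IsAlgClosed Ω›

lemma key_lift {K F Ω : Type*} [Field K] [Field F] [Field Ω] [Algebra K F] [Algebra F Ω]
    [Algebra K Ω] [IsScalarTower K F Ω] [IsAlgClosed Ω] [Algebra.IsAlgebraic F Ω]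
    (hreg : ∀ x : F, IsSeparable K x → x ∈ (algebraMap K F).range)
    (τ : separableClosure K Ω ≃ₐ[K] separableClosure K Ω) :
    ∃ σ : Ω ≃ₐ[F] Ω, ∀ x : separableClosure K Ω, σ (x : Ω) = (τ x : Ω) := by
  classical
  let S := separableClosure K Ω
  have hLD : S.toSubalgebra.LinearDisjoint (IsScalarTower.toAlgHom K F Ω).range :=
    key_LD hreg
  let T := ((↥S) ⊗[K] F)
  let m : T →ₐ[K] Ω :=
    Algebra.TensorProduct.productMap S.val (IsScalarTower.toAlgHom K F Ω)
  let g : T →ₐ[K] Ω :=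
    Algebra.TensorProduct.productMap (S.val.comp τ.toAlgHom) (IsScalarTower.toAlgHom K F Ω)
  -- m is injective by linear disjointness
  have minj : Function.Injective m := by
    have h1 := hLD.injective
    let eF : F ≃ₗ[K] (Subalgebra.toSubmodule (IsScalarTower.toAlgHom K F Ω).range) :=
      (AlgEquiv.ofInjectiveField (IsScalarTower.toAlgHom K F Ω)).toLinearEquiv
    let ψ := TensorProduct.congr (LinearEquiv.refl K (↥S)) eF
    have hcomp : ∀ z : T, m z = Submodule.mulMap (Subalgebra.toSubmodule S.toSubalgebra)
        (Subalgebra.toSubmodule (IsScalarTower.toAlgHom K F Ω).range) (ψ z) := by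
      intro z
      induction z using TensorProduct.induction_on with
      | zero => rw [map_zero m, ψ.map_zero, (Submodule.mulMap _ _).map_zero]
      | tmul a b =>
        show (a : Ω) * (IsScalarTower.toAlgHom K F Ω) b = _
        have hψ : ψ (a ⊗ₜ[K] b) = a ⊗ₜ[K] (eF b) := by
          simp [ψ, TensorProduct.congr_tmul]
        rw [hψ, Submodule.mulMap_tmul]
        rfl
      | add u v hu hv => rw [map_add m, ψ.map_add, (Submodule.mulMap _ _).map_add, hu, hv]
    intro x y h
    apply ψ.injective
    apply h1
    rw [← hcomp, ← hcomp, h]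
  -- g = m ∘ (τ ⊗ 1)
  let tE : T ≃ₐ[K] T := Algebra.TensorProduct.congr τ AlgEquiv.refl
  have hgm : ∀ x, g x = m (tE x) := by
    intro x
    have heq : g = (m.comp tE.toAlgHom) := by
      apply Algebra.TensorProduct.ext'
      intro a b
      show (S.val.comp ↑τ) a * (IsScalarTower.toAlgHom K F Ω) b = m (tE (a ⊗ₜ[K] b))
      have htE : tE (a ⊗ₜ[K] b) = (τ a) ⊗ₜ[K] b := by
        show (Algebra.TensorProduct.congr τ AlgEquiv.refl) (a ⊗ₜ[K] b) = τ a ⊗ₜ[K] b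
        rw [Algebra.TensorProduct.congr_apply, Algebra.TensorProduct.map_tmul]
        simp
      rw [htE]
      rfl
    rw [heq]; rfl
  have ginj : Function.Injective g := by
    intro x y h
    exact tE.injective (minj (by rw [← hgm, ← hgm, h]))
  letI : CommSemiring T := Algebra.TensorProduct.instCommSemiring
  letI : Algebra T Ω := m.toRingHom.toAlgebra
  letI : Algebra T (OmegaCopy Ω) := g.toRingHom.toAlgebra
  haveI : IsDomain T := Function.Injective.isDomain m.toRingHom minj
  haveI := (Module.isTorsionFree_iff_algebraMap_injective (R := T) (A := Ω)).2 minj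
  haveI :=
    (Module.isTorsionFree_iff_algebraMap_injective (R := T) (A := OmegaCopy Ω)).2 ginj
  letI : Algebra F T := (Algebra.TensorProduct.includeRight : F →ₐ[K] T).toRingHom.toAlgebra
  have halgFT : ∀ f : F, algebraMap T Ω (algebraMap F T f) = algebraMap F Ω f := by
    intro f
    show (Algebra.TensorProduct.productMap S.val (IsScalarTower.toAlgHom K F Ω))
      ((1 : ↥S) ⊗ₜ[K] f) = algebraMap F Ω f
    rw [Algebra.TensorProduct.productMap_apply_tmul]
    simp
  haveI : IsScalarTower F T Ω := IsScalarTower.of_algebraMap_eq fun f => (halgFT f).symm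
  have hinjFT : Function.Injective (algebraMap F T) := by
    intro x y h
    have := congrArg (algebraMap T Ω) h
    rw [halgFT, halgFT] at this
    exact (algebraMap F Ω).injective this
  haveI : Algebra.IsAlgebraic T Ω := Algebra.IsAlgebraic.extendScalars hinjFT
  let ℓ := IsAlgClosed.lift (M := OmegaCopy Ω) (R := T) (S := Ω)
  have hℓ : ∀ t : T, ℓ (algebraMap T Ω t) = g t := fun t => ℓ.commutes t
  let σ0 : Ω →ₐ[F] Ω :=
    { toRingHom := (ℓ : Ω →ₐ[T] OmegaCopy Ω).toRingHom
      commutes' := by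
        intro f
        have h1 : algebraMap F Ω f = algebraMap T Ω (algebraMap F T f) := (halgFT f).symm
        show ℓ (algebraMap F Ω f) = algebraMap F Ω f
        conv_lhs => rw [h1]
        rw [hℓ]
        show (Algebra.TensorProduct.productMap (S.val.comp ↑τ) (IsScalarTower.toAlgHom K F Ω))
          ((1 : ↥S) ⊗ₜ[K] f) = _
        rw [Algebra.TensorProduct.productMap_apply_tmul]
        simp }
  have hbij : Function.Bijective σ0 := Algebra.IsAlgebraic.algHom_bijective σ0
  refine ⟨AlgEquiv.ofBijective σ0 hbij, ?_⟩
  intro x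
  show σ0 (x : Ω) = (τ x : Ω)
  have hx : (x : Ω) = algebraMap T Ω (x ⊗ₜ[K] (1 : F)) := by
    show _ = (Algebra.TensorProduct.productMap S.val (IsScalarTower.toAlgHom K F Ω))
      (x ⊗ₜ[K] (1 : F))
    rw [Algebra.TensorProduct.productMap_apply_tmul]
    simp
  show ℓ (x : Ω) = _
  rw [hx, hℓ]
  show (Algebra.TensorProduct.productMap (S.val.comp ↑τ) (IsScalarTower.toAlgHom K F Ω))
    (x ⊗ₜ[K] (1 : F)) = _
  rw [Algebra.TensorProduct.productMap_apply_tmul]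
  simp


/-- Let `K ⊆ F` be a field extension, `Ω` an algebraic closure of `F`, and let
`L/K` be a (possibly infinite) Galois extension inside the separable closure
`K^sep = separableClosure K Ω` of `K`.  Suppose `F` is linearly disjoint from `L`
over `K` in the sense that the restriction map `Gal(FL/F) → Gal(L/K)` is an
isomorphism (equivalently: the restriction map `G_F → Gal(L/K)`, which always
factors injectively through `Gal(FL/F)`, is surjective).  If moreover
`F·K^sep = F^sep` and `F/K` is regular (`K` separably algebraically closed in `F`),
then the restriction map `res : G_F → G_K` is an isomorphism of profinite groups. -/
theorem res_bijective_of_linearlyDisjoint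
    (K F Ω : Type*) [Field K] [Field F] [Field Ω] [Algebra K F] [Algebra F Ω]
    [Algebra K Ω] [IsScalarTower K F Ω] [IsAlgClosed Ω] [Algebra.IsAlgebraic F Ω]
    (L : IntermediateField K Ω) (hL : L ≤ separableClosure K Ω) [IsGalois K L]
    -- linear disjointness: `Gal(FL/F) → Gal(L/K)` is an isomorphism
    (hdisj : Function.Surjective
      (fun σ : Ω ≃ₐ[F] Ω => AlgEquiv.restrictNormal (σ.restrictScalars K) L))
    -- `F·K^sep = F^sep`
    (hcomp : IntermediateField.adjoin F ((separableClosure K Ω : IntermediateField K Ω) :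
        Set Ω) = separableClosure F Ω)
    -- `F/K` is regular
    (hreg : ∀ x : F, IsSeparable K x → x ∈ (algebraMap K F).range) :
    Function.Bijective
      (fun σ : Ω ≃ₐ[F] Ω =>
        AlgEquiv.restrictNormal (σ.restrictScalars K) (separableClosure K Ω)) := by
  constructor
  · -- injectivity
    intro σ σ' h
    simp only at h
    -- σ and σ' agree on the separable closure of K
    have hagree : ∀ x : Ω, x ∈ separableClosure K Ω → σ x = σ' x := by
      intro x hx
      have h1 := AlgEquiv.restrictNormal_commutes (σ.restrictScalars K)
        (separableClosure K Ω) ⟨x, hx⟩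
      have h2 := AlgEquiv.restrictNormal_commutes (σ'.restrictScalars K)
        (separableClosure K Ω) ⟨x, hx⟩
      have h3 := congrArg (fun (ρ : separableClosure K Ω ≃ₐ[K] separableClosure K Ω) =>
        (ρ ⟨x, hx⟩ : Ω)) h
      calc σ x = algebraMap (separableClosure K Ω) Ω
            ((AlgEquiv.restrictNormal (σ.restrictScalars K) (separableClosure K Ω)) ⟨x, hx⟩) :=
            h1.symm
        _ = algebraMap (separableClosure K Ω) Ω
            ((AlgEquiv.restrictNormal (σ'.restrictScalars K) (separableClosure K Ω)) ⟨x, hx⟩) := by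
            exact_mod_cast h3
        _ = σ' x := h2
    -- hence they agree on the separable closure of F, by `hcomp`
    have halg : ∀ x ∈ ((separableClosure K Ω : IntermediateField K Ω) : Set Ω),
        IsAlgebraic F x := by
      intro x hx
      exact (((mem_separableClosure_iff).1 hx).isIntegral.tower_top (A := F)).isAlgebraic
    have hsub := IntermediateField.adjoin_toSubalgebra_of_isAlgebraic halg
    have hagree2 : ∀ x : Ω, x ∈ separableClosure F Ω → σ x = σ' x := by
      intro x hx
      rw [← hcomp] at hx
      have hx' : x ∈ Algebra.adjoin F ((separableClosure K Ω : IntermediateField K Ω) :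
          Set Ω) := by
        rw [← hsub]; exact hx
      have hle : Algebra.adjoin F ((separableClosure K Ω : IntermediateField K Ω) : Set Ω) ≤
          AlgHom.equalizer (σ : Ω →ₐ[F] Ω) (σ' : Ω →ₐ[F] Ω) :=
        Algebra.adjoin_le fun y hy => hagree y hy
      exact hle hx'
    -- conclude by pure inseparability
    ext x
    haveI : IsPurelyInseparable (separableClosure F Ω) Ω :=
      separableClosure.isPurelyInseparable F Ω
    set q := ringExpChar (separableClosure F Ω) with hq
    obtain ⟨n, y, hy⟩ := IsPurelyInseparable.pow_mem (separableClosure F Ω) q x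
    haveI : ExpChar Ω q :=
      expChar_of_injective_algebraMap (algebraMap (separableClosure F Ω) Ω).injective q
    have e1 : σ x ^ q ^ n = σ' x ^ q ^ n := by
      rw [← map_pow, ← map_pow, ← hy]
      exact hagree2 _ y.2
    have e2 : (iterateFrobenius Ω q n) (σ x) = (iterateFrobenius Ω q n) (σ' x) := by
      rw [iterateFrobenius_def, iterateFrobenius_def]; exact e1
    exact (iterateFrobenius Ω q n).injective e2
  · -- surjectivity
    intro τ
    obtain ⟨σ, hσ⟩ := key_lift hreg τ
    refine ⟨σ, ?_⟩
    ext x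
    have h1 := AlgEquiv.restrictNormal_commutes (σ.restrictScalars K)
      (separableClosure K Ω) x
    exact h1.trans (hσ x)
end

section
/- Let K ⊆ F be fields with K relatively separably algebraically closed in F, and let v be a henselian valuation on F whose restriction to K is a valuation. Then the restriction of v to K is henselian. -/
open Polynomial

/-- Henselianity descends to relatively separably algebraically closed subfields:
if `K` is relatively separably algebraically closed in `F` and `v` is a henselian
valuation on `F`, then the restriction of `v` to `K` is henselian. -/
theorem henselian_comap_of_relSepClosed
    (K F : Type*) [Field K] [Field F] [Algebra K F]
    (hrel : ∀ x : F, IsSeparable K x → x ∈ (algebraMap K F).range)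
    (v : ValuationSubring F) (hv : HenselianLocalRing v) :
    HenselianLocalRing (v.comap (algebraMap K F)) := by
  set R := v.comap (algebraMap K F) with hR
  -- the natural ring hom from R to v
  let φ : R →+* v :=
  { toFun := fun x => ⟨algebraMap K F x, ValuationSubring.mem_comap.mp x.2⟩
    map_one' := by ext; simp
    map_mul' := fun a b => by ext; simp
    map_zero' := by ext; simp
    map_add' := fun a b => by ext; simp }
  have hφcoe : ∀ x : R, ((φ x : v) : F) = algebraMap K F (x : K) := fun x => rfl
  have hinj : Function.Injective φ := by
    intro a b h
    apply Subtype.ext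
    apply (algebraMap K F).injective
    exact congrArg Subtype.val h
  -- units correspond
  have hUnit : ∀ x : R, IsUnit (φ x) → IsUnit x := by
    intro x hx
    obtain ⟨y, hy⟩ := isUnit_iff_exists_inv.mp hx
    have hy' : (algebraMap K F (x : K)) * (y : F) = 1 := congrArg Subtype.val hy
    have hx0 : (x : K) ≠ 0 := by
      intro h0
      rw [h0, map_zero, zero_mul] at hy'
      exact zero_ne_one hy'
    have hmem : ((x : K))⁻¹ ∈ R := by
      show (↑x)⁻¹ ∈ v.comap (algebraMap K F)
      rw [ValuationSubring.mem_comap, map_inv₀]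
      have hyeq : (y : F) = (algebraMap K F (x : K))⁻¹ :=
        eq_inv_of_mul_eq_one_left (by rw [mul_comm] at hy'; exact hy')
      rw [← hyeq]; exact y.2
    refine IsUnit.of_mul_eq_one (a := x) ⟨(x : K)⁻¹, hmem⟩ ?_
    ext
    push_cast
    field_simp
  have hmax : ∀ x : R, x ∈ IsLocalRing.maximalIdeal R ↔ φ x ∈ IsLocalRing.maximalIdeal v := by
    intro x
    rw [IsLocalRing.mem_maximalIdeal, IsLocalRing.mem_maximalIdeal,
      mem_nonunits_iff, mem_nonunits_iff]
    exact not_congr ⟨fun h => h.map φ, hUnit x⟩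
  constructor
  intro f hf a₀ ha₀ ha₀'
  -- apply henselianity in v
  have heval : (f.map φ).eval (φ a₀) = φ (f.eval a₀) := by
    rw [eval_map, eval₂_at_apply]
  have hdeval : (f.map φ).derivative.eval (φ a₀) = φ (f.derivative.eval a₀) := by
    rw [derivative_map, eval_map, eval₂_at_apply]
  obtain ⟨a, ha_root, ha_cong⟩ := hv.is_henselian (f.map φ) (hf.map φ) (φ a₀)
    (by rw [heval]; exact (hmax _).mp ha₀)
    (by rw [hdeval]; exact ha₀'.map φ)
  -- derivative at the root is a unit
  have hda : IsUnit ((f.map φ).derivative.eval a) := by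
    by_contra h
    have h1 : (f.map φ).derivative.eval a ∈ IsLocalRing.maximalIdeal v :=
      ((IsLocalRing.mem_maximalIdeal _).mpr (mem_nonunits_iff.mpr h))
    have hdvd : a - φ a₀ ∣
        (f.map φ).derivative.eval a - (f.map φ).derivative.eval (φ a₀) :=
      sub_dvd_eval_sub _ _ _
    obtain ⟨c, hc⟩ := hdvd
    have h2 : (f.map φ).derivative.eval a - (f.map φ).derivative.eval (φ a₀)
        ∈ IsLocalRing.maximalIdeal v := by
      rw [hc]; exact Ideal.mul_mem_right _ _ ha_cong
    have h3 : (f.map φ).derivative.eval (φ a₀) ∈ IsLocalRing.maximalIdeal v := by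
      have := (IsLocalRing.maximalIdeal v).sub_mem h1 h2
      simpa using this
    exact mem_nonunits_iff.mp ((IsLocalRing.mem_maximalIdeal _).mp h3) (by rw [hdeval]; exact ha₀'.map φ)
  -- move to F
  set x : F := (a : F) with hx
  set ψ : R →+* K := (algebraMap R K) with hψ
  have hcomp : (algebraMap K F).comp ψ = v.subtype.comp φ := RingHom.ext fun r => rfl
  have hkey : ∀ g : Polynomial R,
      Polynomial.aeval x (g.map ψ) = (((g.map φ).eval a : v) : F) := by
    intro g
    rw [aeval_def, eval₂_map, hcomp, eval_map]
    exact (hom_eval₂ g φ v.subtype a).symm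
  have haev : Polynomial.aeval x (f.map ψ) = 0 := by
    rw [hkey f, ha_root]; rfl
  have hint : IsIntegral K x := ⟨f.map ψ, hf.map ψ, haev⟩
  -- x is separable over K
  have hsep : IsSeparable K x := by
    rw [IsSeparable, separable_iff_derivative_ne_zero (minpoly.irreducible hint)]
    intro hd0
    obtain ⟨q, hq⟩ := minpoly.dvd K x haev
    have : Polynomial.aeval x (f.map ψ).derivative = 0 := by
      rw [hq, derivative_mul, hd0, zero_mul, zero_add, map_mul, minpoly.aeval, zero_mul]
    rw [derivative_map, hkey f.derivative] at this
    have : (((f.map φ).derivative.eval a : ↥v) : F) = 0 := by rw [derivative_map]; exact this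
    have hz : (f.map φ).derivative.eval a = 0 := Subtype.ext this
    rw [hz] at hda
    exact hda.ne_zero rfl
  obtain ⟨b, hb⟩ := hrel x hsep
  have hbR : b ∈ R := by
    show b ∈ v.comap (algebraMap K F)
    rw [ValuationSubring.mem_comap, hb]; exact a.2
  refine ⟨⟨b, hbR⟩, ?_, ?_⟩
  · have hφb : φ ⟨b, hbR⟩ = a := Subtype.ext hb
    apply hinj
    rw [map_zero, ← eval₂_at_apply, ← eval_map, hφb]
    exact ha_root
  · rw [hmax]
    have hφb : φ ⟨b, hbR⟩ = a := Subtype.ext hb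
    rw [map_sub, hφb]
    exact ha_cong
end
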